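/- arXiv:2302.11160 — 2 statements merged into one kernel-verified Lean document; each statement's English description precedes it below -/
import Mathlib

section
/- Let Y be an integral quasi-affine scheme whose ring of global functions B = Γ(Y, O_Y) is Noetherian, and let j : Y → Spec B denote the canonical open immersion into the spectrum of its ring of global functions. Then the complement of j(Y) in Spec B has codimension at least two; that is, every prime ideal p of B that does not lie in the open set j(Y) has height at least 2. -/
open AlgebraicGeometry CategoryTheory Opposite TopologicalSpace

lemma exists_mul_mem_span_aux {B : Type*} [CommRing B] [IsDomain B] [IsNoetherianRing B]
    (p : Ideal B) [hp : p.IsPrime] (a : B) (ha : a ∈ p) (ha0 : a ≠ 0)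
    (hmin : ∀ q : Ideal B, q.IsPrime → a ∈ q → q ≤ p → q = p) :
    ∃ t : B, t ∉ Ideal.span {a} ∧ ∀ c ∈ p, c * t ∈ Ideal.span {a} := by
  classical
  let L := Localization.AtPrime p
  haveI : IsNoetherianRing L :=
    IsLocalization.isNoetherianRing p.primeCompl L inferInstance
  have inj : Function.Injective (algebraMap B L) :=
    IsLocalization.injective L p.primeCompl_le_nonZeroDivisors
  set AL := (Ideal.span {a}).map (algebraMap B L) with hAL
  set P := p.map (algebraMap B L) with hP
  have hP_rad : P ≤ AL.radical := by
    rw [Ideal.radical_eq_sInf]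
    refine le_sInf ?_
    rintro J ⟨hJle, hJprime⟩
    have hq : (J.comap (algebraMap B L)).IsPrime := hJprime.comap _
    have haq : a ∈ J.comap (algebraMap B L) :=
      hJle (Ideal.mem_map_of_mem _ (Ideal.mem_span_singleton_self a))
    have hqp : J.comap (algebraMap B L) ≤ p := by
      intro x hx
      by_contra hxp
      have hunit : IsUnit (algebraMap B L x) :=
        IsLocalization.map_units L (⟨x, hxp⟩ : p.primeCompl)
      exact hJprime.ne_top (J.eq_top_of_isUnit_mem hx hunit)
    have hqeq := hmin _ hq haq hqp
    have hmc : Ideal.map (algebraMap B L) (Ideal.comap (algebraMap B L) J) = J :=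
      IsLocalization.map_comap p.primeCompl L J
    rw [hqeq] at hmc
    exact hmc.le
  obtain ⟨n, hn⟩ := Ideal.exists_pow_le_of_le_radical_of_fg hP_rad (IsNoetherian.noetherian P)
  have hQn : (p ^ n).map (algebraMap B L) ≤ AL := by
    rwa [Ideal.map_pow]
  -- minimal such exponent
  have hQex : ∃ k, (p ^ k).map (algebraMap B L) ≤ AL := ⟨n, hQn⟩
  set n0 := Nat.find hQex with hn0
  have hQn0 : (p ^ n0).map (algebraMap B L) ≤ AL := Nat.find_spec hQex
  have hn0pos : 0 < n0 := by
    rcases Nat.eq_zero_or_pos n0 with h | h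
    swap
    · exact h
    · exfalso
      have h0 : (p ^ 0).map (algebraMap B L) ≤ AL := by rw [← h]; exact hQn0
      rw [pow_zero, Ideal.one_eq_top, Ideal.map_top] at h0
      have h1 : (1 : L) ∈ AL := h0 Submodule.mem_top
      obtain ⟨⟨x, s⟩, hxs⟩ := (IsLocalization.mem_map_algebraMap_iff p.primeCompl L).mp h1
      rw [one_mul] at hxs
      have hsx : (s : B) = (x : B) := inj hxs
      have : (s : B) ∈ Ideal.span {a} := by rw [hsx]; exact x.2
      exact s.2 ((Ideal.span_le.mpr (Set.singleton_subset_iff.mpr ha)) this)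
  have hm : ¬ (p ^ (n0 - 1)).map (algebraMap B L) ≤ AL :=
    Nat.find_min hQex (by omega)
  rw [Ideal.map_le_iff_le_comap] at hm
  obtain ⟨u, hu_mem, hu⟩ := SetLike.not_le_iff_exists.mp hm
  -- u ∈ p ^ (n0 - 1), algebraMap u ∉ AL
  have hu_step : ∀ x ∈ p, algebraMap B L (u * x) ∈ AL := by
    intro x hx
    have : u * x ∈ p ^ n0 := by
      have : u * x ∈ p ^ (n0 - 1) * p := Ideal.mul_mem_mul hu_mem hx
      rwa [← pow_succ, Nat.sub_add_cancel hn0pos] at this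
    exact hQn0 (Ideal.mem_map_of_mem _ this)
  obtain ⟨s, hs⟩ := IsNoetherian.noetherian p
  -- choose clearing denominators for each generator
  have key : ∀ x : B, ∃ σ : B, σ ∉ p ∧ (x ∈ (s : Set B) → σ * (u * x) ∈ Ideal.span {a}) := by
    intro x
    by_cases hx : x ∈ (s : Set B)
    · have hxp : x ∈ p := by rw [← hs]; exact Ideal.subset_span hx
      obtain ⟨⟨⟨w, hw⟩, σ⟩, hσ⟩ :=
        (IsLocalization.mem_map_algebraMap_iff p.primeCompl L).mp (hu_step x hxp)
      refine ⟨σ, σ.2, fun _ => ?_⟩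
      have : u * x * σ = w := by
        apply inj; rw [map_mul]; exact hσ
      have hw' : (σ : B) * (u * x) ∈ Ideal.span {a} := by
        rw [mul_comm, this]; exact hw
      exact hw'
    · exact ⟨1, fun h => hp.ne_top (Ideal.eq_top_of_isUnit_mem p h isUnit_one), fun h => (hx h).elim⟩
  choose σ hσp hσmem using key
  set S := ∏ x ∈ s, σ x with hS
  have hSp : S ∈ p.primeCompl := Submonoid.prod_mem _ (fun x _ => hσp x)
  refine ⟨S * u, ?_, ?_⟩
  · intro hmem
    have h1 : algebraMap B L (S * u) ∈ AL := Ideal.mem_map_of_mem _ hmem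
    rw [map_mul] at h1
    have hunit : IsUnit (algebraMap B L S) := IsLocalization.map_units L ⟨S, hSp⟩
    have : algebraMap B L u ∈ AL := by
      obtain ⟨v, hv⟩ := hunit
      have := AL.mul_mem_left ↑v⁻¹ h1
      rwa [← mul_assoc, ← hv, ← Units.val_mul, inv_mul_cancel, Units.val_one, one_mul] at this
    exact hu this
  · have hcol : p ≤ (Ideal.span {a}).colon (Submodule.span B {S * u}) := by
      rw [← hs, Submodule.span_le]
      intro x hx
      rw [SetLike.mem_coe, Submodule.mem_colon_span_singleton]
      have : x • (S * u) = (∏ y ∈ s.erase x, σ y) * (σ x * (u * x)) := by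
        rw [smul_eq_mul, hS, ← Finset.mul_prod_erase s σ hx]
        ring
      rw [this]
      exact Ideal.mul_mem_left _ _ (hσmem x hx)
    intro d hd
    have := hcol hd
    rw [Submodule.mem_colon_span_singleton, smul_eq_mul] at this
    exact this


lemma no_section_aux {B : Type*} [CommRing B] [IsDomain B]
    (U : Opens (PrimeSpectrum.Top B))
    (hsurj : Function.Surjective (StructureSheaf.toOpen B U))
    (x0s : PrimeSpectrum B) (hx0 : x0s ∈ U)
    (p : PrimeSpectrum B) (hgen : ∀ q : PrimeSpectrum B, q ∈ U → ¬ p.asIdeal ≤ q.asIdeal)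
    (a t : B) (ha0 : a ≠ 0) (ht : t ∉ Ideal.span {a})
    (htp : ∀ c ∈ p.asIdeal, c * t ∈ Ideal.span {a}) : False := by
  classical
  have hex : ∀ x : ↥U, ∃ cc bb : B,
      cc ∈ p.asIdeal ∧ cc ∉ x.1.asIdeal ∧ cc * t = a * bb := by
    intro x
    obtain ⟨cc, hcp, hcq⟩ := SetLike.not_le_iff_exists.mp (hgen x.1 x.2)
    obtain ⟨bb, hbb⟩ := Ideal.mem_span_singleton.mp (htp cc hcp)
    exact ⟨cc, bb, hcp, hcq, hbb⟩
  choose c b hcp hcq hcb using hex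
  have hbc : ∀ x z : ↥U, b z * c x = b x * c z := by
    intro x z
    have h : a * (b z * c x) = a * (b x * c z) := by
      calc a * (b z * c x) = (c z * t) * c x := by rw [hcb z]; ring
        _ = (c x * t) * c z := by ring
        _ = a * (b x * c z) := by rw [hcb x]; ring
    exact mul_left_cancel₀ ha0 h
  let s : ∀ x : ↥U, StructureSheaf.Localizations B x.1 := fun x =>
    haveI : x.1.asIdeal.IsPrime := x.1.isPrime
    LocalizedModule.mk (b x)
      (⟨c x, hcq x⟩ : x.1.asIdeal.primeCompl)
  have main : ∀ (x z : ↥U) (h : c x ∉ z.1.asIdeal),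
      s z = LocalizedModule.mk (b x) (⟨c x, h⟩ : @Ideal.primeCompl _ _ z.1.asIdeal z.1.isPrime) := by
    intro x z h
    show LocalizedModule.mk _ _ = _
    rw [LocalizedModule.mk_eq]
    refine ⟨1, ?_⟩
    simp only [one_smul, Submonoid.smul_def, smul_eq_mul]
    linear_combination hbc x z
  have hs : (StructureSheaf.isLocallyFraction B B).pred s := by
    intro x
    refine ⟨U ⊓ PrimeSpectrum.basicOpen (c x),
      ⟨x.2, (PrimeSpectrum.mem_basicOpen _ _).mpr (hcq x)⟩,
      homOfLE inf_le_left, b x, c x, ?_⟩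
    intro y
    have hy : c x ∉ y.1.asIdeal := y.2.2
    exact ⟨hy, main x ((homOfLE (inf_le_left : U ⊓ PrimeSpectrum.basicOpen (c x) ≤ U)) y) hy⟩
  let S : (Spec.structureSheaf B).1.obj (op U) := ⟨s, hs⟩
  obtain ⟨b', hb'⟩ := hsurj S
  let x0 : ↥U := ⟨x0s, hx0⟩
  have heval : s x0 = LocalizedModule.mk b' 1 := by
    have h := congrFun (congrArg Subtype.val hb') x0
    exact h.symm.trans rfl
  have hb'c : b' * c x0 = b x0 := by
    obtain ⟨u, hu⟩ := LocalizedModule.mk_eq.mp heval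
    simp only [one_smul, Submonoid.smul_def, smul_eq_mul] at hu
    have hu0 : (u : B) ≠ 0 := fun h => u.2 (h ▸ x0s.asIdeal.zero_mem)
    exact (mul_left_cancel₀ hu0 (by rw [hu]; ring)).symm
  have hc0 : c x0 ≠ 0 := fun h => (hcq x0) (h ▸ x0s.asIdeal.zero_mem)
  have hab : a * b' = t := by
    have h : c x0 * (a * b') = c x0 * t := by
      calc c x0 * (a * b') = a * (b' * c x0) := by ring
        _ = a * b x0 := by rw [hb'c]
        _ = c x0 * t := (hcb x0).symm
    exact mul_left_cancel₀ hc0 h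
  exact ht (Ideal.mem_span_singleton.mpr ⟨b', hab.symm⟩)

/-- If `Y` is an integral quasi-affine scheme (i.e. the canonical map to the spectrum of its
ring of global functions `B = Γ(Y, ⊤)` is an open immersion) and `B` is Noetherian, then every
prime of `B` lying outside the image of `Y` has height at least two. -/
theorem complement_of_quasiAffine_has_codim_ge_two
    (Y : Scheme.{0}) [IsIntegral Y]
    (hqa : IsOpenImmersion Y.toSpecΓ)
    (hnoeth : IsNoetherianRing Γ(Y, ⊤))
    (p : PrimeSpectrum Γ(Y, ⊤))
    (hp : p ∉ Set.range Y.toSpecΓ.base) :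
    2 ≤ Order.height p := by
  classical
  haveI := hqa
  haveI := hnoeth
  by_contra hlt
  push_neg at hlt
  set f := Y.toSpecΓ with hf
  set U : (Spec Γ(Y, ⊤)).Opens := f ''ᵁ ⊤ with hU
  have hUrange : U.carrier = Set.range f.base := by
    rw [hU, f.image_top_eq_opensRange]
    exact Scheme.Hom.coe_opensRange f
  have hpU : p ∉ U := fun h => hp (by rw [← hUrange]; exact h)
  have hgen : ∀ q : PrimeSpectrum Γ(Y, ⊤), q ∈ U → ¬ p.asIdeal ≤ q.asIdeal := by
    intro q hq hle
    exact hpU (((PrimeSpectrum.le_iff_specializes p q).mp hle).mem_open U.isOpen hq)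
  let pt0 : PrimeSpectrum Γ(Y, ⊤) := ⟨⊥, Ideal.bot_prime⟩
  obtain ⟨y0⟩ := (inferInstance : Nonempty Y)
  have hq0 : f.base y0 ∈ U := by
    have h : f.base y0 ∈ Set.range f.base := ⟨y0, rfl⟩
    rwa [← hUrange] at h
  have hbot : pt0 ∈ U :=
    ((PrimeSpectrum.le_iff_specializes pt0 (f.base y0)).mp bot_le).mem_open U.isOpen hq0
  have hpbot : p.asIdeal ≠ ⊥ := by
    intro h
    exact hpU (by rw [show p = pt0 from PrimeSpectrum.ext h]; exact hbot)
  have h1 : Order.height p ≤ ((1 : ℕ) : ℕ∞) := by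
    have h2 : Order.height p < (2 : ℕ∞) := hlt
    rw [show (2 : ℕ∞) = (1 : ℕ∞) + 1 by norm_num, ENat.lt_add_one_iff (by simp)] at h2
    exact_mod_cast h2
  have hq_bot : ∀ q : PrimeSpectrum Γ(Y, ⊤), q < p → q.asIdeal = ⊥ := by
    intro q hq
    have h := (Order.height_le_coe_iff.mp h1) q hq
    rw [show ((1:ℕ):ℕ∞) = 1 by norm_num, ENat.lt_one_iff_eq_zero] at h
    have hmin : IsMin q := Order.height_eq_zero.mp h
    have hle : q ≤ pt0 := hmin (show pt0.asIdeal ≤ q.asIdeal from bot_le)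
    exact le_antisymm hle bot_le
  obtain ⟨a, ha, ha0⟩ := (Submodule.ne_bot_iff _).mp hpbot
  have hminp : ∀ q : Ideal Γ(Y, ⊤), q.IsPrime → a ∈ q → q ≤ p.asIdeal → q = p.asIdeal := by
    intro q hq haq hle
    by_contra hne
    have hlt' : (⟨q, hq⟩ : PrimeSpectrum Γ(Y, ⊤)) < p :=
      lt_of_le_of_ne hle (fun h => hne (congrArg PrimeSpectrum.asIdeal h))
    have hb := hq_bot _ hlt'
    simp only at hb
    rw [hb] at haq
    exact ha0 (by simpa using haq)
  haveI := p.isPrime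
  obtain ⟨t, ht, htp⟩ := exists_mul_mem_span_aux p.asIdeal a ha ha0 hminp
  -- surjectivity of toOpen onto U
  have e : (⊤ : Y.Opens) ≤ f ⁻¹ᵁ U := (f.preimage_image_eq ⊤).ge
  haveI hiso1 : IsIso (f.appLE U ⊤ e) := by
    rw [← f.appIso_hom' ⊤]
    infer_instance
  have htop : f ⁻¹ᵁ (⊤ : (Spec Γ(Y, ⊤)).Opens) = ⊤ := by
    ext x
    simp
  have e' : (⊤ : Y.Opens) ≤ f ⁻¹ᵁ (⊤ : (Spec Γ(Y, ⊤)).Opens) := htop.ge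
  have hmap : (Spec Γ(Y, ⊤)).presheaf.map (homOfLE (le_top : U ≤ ⊤)).op ≫ f.appLE U ⊤ e
      = f.appLE ⊤ ⊤ e' := by
    rw [Scheme.Hom.map_appLE]
  haveI hiso2 : IsIso (f.appLE ⊤ ⊤ e') := by
    rw [Scheme.Hom.appLE]
    haveI : IsIso (f.app ⊤) := by
      rw [show f.app ⊤ = f.appTop from rfl, hf, Scheme.toSpecΓ_appTop]
      exact (Scheme.ΓSpecIso _).isIso_hom
    haveI : IsIso (Y.presheaf.map (homOfLE e').op) := by
      have heq2 : homOfLE e' = eqToHom htop.symm := Subsingleton.elim _ _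
      rw [heq2]
      infer_instance
    infer_instance
  haveI hiso3 : IsIso ((Spec Γ(Y, ⊤)).presheaf.map (homOfLE (le_top : U ≤ ⊤)).op) := by
    have h2 : (Spec Γ(Y, ⊤)).presheaf.map (homOfLE (le_top : U ≤ ⊤)).op
        = f.appLE ⊤ ⊤ e' ≫ inv (f.appLE U ⊤ e) := by
      rw [← hmap]
      simp
    rw [h2]
    infer_instance
  have hsurj : Function.Surjective (StructureSheaf.toOpen ↑Γ(Y, ⊤) U) := by
    have heq : StructureSheaf.toOpen ↑Γ(Y, ⊤) U
        = StructureSheaf.toOpen ↑Γ(Y, ⊤) ⊤ ≫ (Spec Γ(Y, ⊤)).presheaf.map (homOfLE (le_top : U ≤ ⊤)).op :=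
      (StructureSheaf.toOpen_res _ _ _ _).symm
    rw [heq]
    haveI : IsIso (StructureSheaf.toOpen ↑Γ(Y, ⊤) (⊤ : Opens (PrimeSpectrum.Top ↑Γ(Y, ⊤)))) :=
      (ConcreteCategory.isIso_iff_bijective _).mpr (StructureSheaf.algebraMap_obj_top_bijective (R := ↑Γ(Y, ⊤)))
    have : IsIso (StructureSheaf.toOpen ↑Γ(Y, ⊤) ⊤ ≫ (Spec Γ(Y, ⊤)).presheaf.map (homOfLE (le_top : U ≤ ⊤)).op) :=
      IsIso.comp_isIso' inferInstance hiso3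
    exact ((ConcreteCategory.isIso_iff_bijective _).mp this).2
  exact no_section_aux U hsurj (f.base y0) hq0 p hgen a t ha0 ht htp
end

section
/- Let d be a positive integer and let v_1, …, v_d ∈ ℚ^d be vectors forming a basis of ℚ^d over ℚ (viewed inside ℝ^d). Let C = { Σ_{i=1}^d α_i v_i : α_i ∈ ℝ, α_i > 0 } be the open cone of strictly positive real combinations of the v_i, and let Z ⊆ ℝ^d be a closed subset which does not contain C and which is closed under multiplication by any positive real scalar (if z ∈ Z and t > 0 then t·z ∈ Z). Then there exist positive integers n_1, …, n_d such that the point Σ_{i=1}^d n_i v_i does not lie in Z. -/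
/-- If `v₁, …, v_d` is a `ℚ`-basis of `ℚ^d` (viewed inside `ℝ^d`), `C` is the open cone of
strictly positive real combinations of the `vᵢ`, and `Z ⊆ ℝ^d` is a closed subset stable
under positive scaling which does not contain `C`, then some strictly positive integer
combination of the `vᵢ` lies outside `Z`. -/
theorem exists_pos_int_comb_not_mem
    (d : ℕ) (hd : 0 < d) (v : Fin d → (Fin d → ℚ))
    (hv : LinearIndependent ℚ v)
    (hspan : Submodule.span ℚ (Set.range v) = ⊤)
    (C : Set (Fin d → ℝ))
    (hC : C = {y | ∃ α : Fin d → ℝ, (∀ i, 0 < α i) ∧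
      y = ∑ i, α i • (fun j => ((v i j : ℝ)))})
    (Z : Set (Fin d → ℝ)) (hZclosed : IsClosed Z)
    (hZscale : ∀ z ∈ Z, ∀ t : ℝ, 0 < t → t • z ∈ Z)
    (hZC : ¬ C ⊆ Z) :
    ∃ m : Fin d → ℕ, (∀ i, 0 < m i) ∧
      (∑ i, (m i : ℝ) • (fun j => ((v i j : ℝ)))) ∉ Z := by
  obtain ⟨y, hyC, hyZ⟩ := Set.not_subset.mp hZC
  rw [hC] at hyC
  obtain ⟨α, hα, rfl⟩ := hyC
  set w : Fin d → (Fin d → ℝ) := fun i => (fun j => ((v i j : ℝ))) with hw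
  set f : (Fin d → ℝ) → (Fin d → ℝ) := fun β => ∑ i, β i • w i with hf
  have hcont : Continuous f := by
    apply continuous_finset_sum
    intro i _
    exact (continuous_apply i).smul continuous_const
  have hopen : IsOpen (f ⁻¹' Zᶜ) := hZclosed.isOpen_compl.preimage hcont
  have hαmem : α ∈ f ⁻¹' Zᶜ := hyZ
  obtain ⟨ε, hε, hball⟩ := Metric.isOpen_iff.mp hopen α hαmem
  have hq : ∀ i, ∃ q : ℚ, α i < (q : ℝ) ∧ (q : ℝ) < α i + ε / 2 := fun i =>
    exists_rat_btwn (by linarith)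
  choose q hq1 hq2 using hq
  have hqpos : ∀ i, 0 < q i := fun i => by
    have h := lt_trans (hα i) (hq1 i)
    exact_mod_cast h
  have hmem : (fun i => ((q i : ℝ))) ∈ Metric.ball α ε := by
    rw [Metric.mem_ball, dist_pi_lt_iff hε]
    intro i
    rw [Real.dist_eq, abs_lt]
    constructor <;> [linarith [hq1 i, hq2 i]; linarith [hq1 i, hq2 i]]
  have hp : f (fun i => ((q i : ℝ))) ∉ Z := hball hmem
  -- clear denominators
  set N : ℕ := ∏ i, (q i).den with hN
  have hNpos : 0 < N := Finset.prod_pos fun i _ => (q i).pos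
  have hdvd : ∀ i, (q i).den ∣ N := fun i => Finset.dvd_prod_of_mem _ (Finset.mem_univ i)
  refine ⟨fun i => (N / (q i).den) * (q i).num.toNat, ?_, ?_⟩
  · intro i
    exact Nat.mul_pos (Nat.div_pos (Nat.le_of_dvd hNpos (hdvd i)) (q i).pos)
      (by have h := Rat.num_pos.mpr (hqpos i); omega)
  · have hcastQ : ∀ i, ((N / (q i).den * (q i).num.toNat : ℕ) : ℚ) = (N : ℚ) * q i := by
      intro i
      have hden : ((q i).den : ℚ) ≠ 0 := by exact_mod_cast (q i).pos.ne'
      have h1 : (((q i).num.toNat : ℕ) : ℚ) = ((q i).num : ℚ) := by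
        exact_mod_cast Int.toNat_of_nonneg (Rat.num_nonneg.mpr (hqpos i).le)
      rw [Nat.cast_mul, Nat.cast_div (hdvd i) hden, h1, div_mul_eq_mul_div,
        mul_div_assoc, Rat.num_div_den]
    have hcastR : ∀ i, ((N / (q i).den * (q i).num.toNat : ℕ) : ℝ) = (N : ℝ) * (q i : ℝ) := by
      intro i
      have := hcastQ i
      exact_mod_cast congrArg (fun x : ℚ => (x : ℝ)) this
    have hsum : (∑ i, ((N / (q i).den * (q i).num.toNat : ℕ) : ℝ) • w i)
        = (N : ℝ) • ∑ i, (q i : ℝ) • w i := by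
      rw [Finset.smul_sum]
      refine Finset.sum_congr rfl fun i _ => ?_
      rw [hcastR i, smul_smul]
    rw [hsum]
    intro hmemZ
    have hNne : (N : ℝ) ≠ 0 := by exact_mod_cast hNpos.ne'
    have := hZscale _ hmemZ ((N : ℝ))⁻¹ (by positivity)
    rw [inv_smul_smul₀ hNne] at this
    exact hp this
end
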